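/- There exists a constant C > 0 such that for every integer k ≥ 1 the constant c_k satisfies |c_k − k·Σ_{i=1}^k 1/i| ≤ (C/k)·(k·Σ_{i=1}^k 1/i); that is, c_k = (1 + O(1/k))·k·Σ_{i=1}^k 1/i as k → ∞. -/

import Mathlib

open Filter Real Topology

/-- The formal exponential of a power series (intended for series with zero
constant coefficient, in which case for each `d` only finitely many `i` give a
nonzero contribution `coeff d (A ^ i) / i!`). -/
noncomputable def formalExp (A : PowerSeries ℝ) : PowerSeries ℝ :=
  PowerSeries.mk fun d => ∑ᶠ i : ℕ, PowerSeries.coeff d (A ^ i) / (Nat.factorial i : ℝ)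

/-- The formal power series `c • ∑_{i ≥ 1} B(z^i)/i`, where `B` is the power series
with coefficients `b`. -/
noncomputable def diagSum (c : ℝ) (b : ℕ → ℝ) : PowerSeries ℝ :=
  PowerSeries.mk fun d => ∑ᶠ i ∈ {i : ℕ | 1 ≤ i}, (c * if i ∣ d then b (d / i) else 0) / (i : ℝ)

/-- The defining functional equation `B̄_k(z) = z · exp(k · ∑_{i ≥ 1} B̄_k(z^i)/i)`
for the formal power series `B̄_k` with coefficient sequence `b`. -/
def KTreeSeriesEq (k : ℕ) (b : ℕ → ℝ) : Prop :=
  PowerSeries.mk b = PowerSeries.X * formalExp (diagSum (k : ℝ) b)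

/-- `ρ` is the radius of convergence of the power series with (nonnegative)
coefficients `b`. -/
def IsRadius (b : ℕ → ℝ) (ρ : ℝ) : Prop :=
  (∀ x : ℝ, 0 ≤ x → x < ρ → Summable fun n => b n * x ^ n) ∧
  (∀ x : ℝ, ρ < x → ¬ Summable fun n => b n * x ^ n)

/-- `∑_{i ≥ 2} B̄_k'(ρ^i) · ρ^i`, written via `B̄'(y)·y = ∑_n n·b_n·y^n`. -/
noncomputable def sTail (b : ℕ → ℝ) (ρ : ℝ) : ℝ :=
  ∑' i : ℕ, ∑' n : ℕ, (n : ℝ) * b n * (ρ ^ (i + 2)) ^ n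

/-- The scaling constant `c_k = k (∑_{i=1}^k 1/i) √(1 + k ∑_{i≥2} B̄_k'(ρ^i) ρ^i)`. -/
noncomputable def cConst (k : ℕ) (b : ℕ → ℝ) (ρ : ℝ) : ℝ :=
  (k : ℝ) * (∑ i ∈ Finset.range k, (1 : ℝ) / (i + 1)) * Real.sqrt (1 + k * sTail b ρ)

lemma diag_coeff_zero (c : ℝ) (b : ℕ → ℝ) (hb0 : b 0 = 0) :
    PowerSeries.coeff 0 (diagSum c b) = 0 := by
  rw [diagSum, PowerSeries.coeff_mk]
  apply finsum_mem_eq_zero_of_forall_eq_zero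
  intro i _
  simp [Nat.zero_div, hb0]

lemma diag_coeff (c : ℝ) (b : ℕ → ℝ) (d : ℕ) (hd : d ≠ 0) :
    PowerSeries.coeff d (diagSum c b) = ∑ i ∈ d.divisors, c * b (d / i) / i := by
  rw [diagSum, PowerSeries.coeff_mk]
  rw [finsum_mem_eq_sum_of_subset _ (t := d.divisors) ?_ ?_]
  · exact Finset.sum_congr rfl fun i hi => by rw [if_pos (Nat.mem_divisors.mp hi).1]
  · rintro i ⟨hi1, hi2⟩
    rw [Function.mem_support] at hi2
    rw [Finset.mem_coe, Nat.mem_divisors]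
    refine ⟨?_, hd⟩
    by_contra hdvd
    simp [hdvd] at hi2
  · intro i hi
    simp only [Finset.mem_coe, Nat.mem_divisors] at hi
    exact Nat.pos_of_dvd_of_pos hi.1 (Nat.pos_of_ne_zero hd)

lemma diag_coeff_nonneg (c : ℝ) (hc : 0 ≤ c) (b : ℕ → ℝ) (hb0 : b 0 = 0)
    (hb : ∀ n, 0 ≤ b n) (d : ℕ) : 0 ≤ PowerSeries.coeff d (diagSum c b) := by
  rcases eq_or_ne d 0 with rfl | hd
  · rw [diag_coeff_zero c b hb0]
  · rw [diag_coeff c b d hd]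
    exact Finset.sum_nonneg fun i _ => div_nonneg (mul_nonneg hc (hb _)) (by positivity)

lemma diag_coeff_ge (c : ℝ) (hc : 0 ≤ c) (b : ℕ → ℝ) (hb : ∀ n, 0 ≤ b n) (d : ℕ) (hd : d ≠ 0) :
    c * b d ≤ PowerSeries.coeff d (diagSum c b) := by
  rw [diag_coeff c b d hd]
  have h1 : (1 : ℕ) ∈ d.divisors := Nat.one_mem_divisors.mpr hd
  calc c * b d = c * b (d / 1) / (1 : ℕ) := by norm_num
  _ ≤ ∑ i ∈ d.divisors, c * b (d / i) / i :=
      Finset.single_le_sum (f := fun i : ℕ => c * b (d / i) / (i : ℝ))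
        (fun i _ => div_nonneg (mul_nonneg hc (hb _)) (by positivity)) h1

lemma pow_coeff_nonneg (A : PowerSeries ℝ) (hA : ∀ d, 0 ≤ PowerSeries.coeff d A) :
    ∀ i d, 0 ≤ PowerSeries.coeff d (A ^ i) := by
  intro i
  induction i with
  | zero => intro d; rcases eq_or_ne d 0 with rfl | hd
            · simp
            · simp [PowerSeries.coeff_one, hd]
  | succ n ih =>
      intro d
      rw [pow_succ, PowerSeries.coeff_mul]
      exact Finset.sum_nonneg fun p _ => mul_nonneg (ih p.1) (hA p.2)

lemma exp_coeff (A : PowerSeries ℝ) (hA0 : PowerSeries.constantCoeff A = 0) (d : ℕ) :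
    PowerSeries.coeff d (formalExp A) =
      ∑ i ∈ Finset.range (d + 1), PowerSeries.coeff d (A ^ i) / (Nat.factorial i : ℝ) := by
  rw [formalExp, PowerSeries.coeff_mk]
  apply finsum_eq_sum_of_support_subset
  intro i hi
  rw [Function.mem_support] at hi
  simp only [Finset.coe_range, Set.mem_Iio]
  by_contra hcon
  push_neg at hcon
  have hdvd : (PowerSeries.X : PowerSeries ℝ) ^ i ∣ A ^ i :=
    pow_dvd_pow_of_dvd (PowerSeries.X_dvd_iff.mpr hA0) i
  have := PowerSeries.X_pow_dvd_iff.mp hdvd d (by omega)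
  rw [this] at hi
  simp at hi

section coeffs

variable {k : ℕ} {b : ℕ → ℝ}

lemma b_succ (heq : KTreeSeriesEq k b) (n : ℕ) :
    b (n + 1) = PowerSeries.coeff n (formalExp (diagSum (k : ℝ) b)) := by
  have : PowerSeries.coeff (n+1) (PowerSeries.mk b)
      = PowerSeries.coeff (n+1) (PowerSeries.X * formalExp (diagSum (k : ℝ) b)) := by
    rw [heq]
  rwa [PowerSeries.coeff_mk, PowerSeries.coeff_succ_X_mul] at this

lemma diag_const0 (hb0 : b 0 = 0) : PowerSeries.constantCoeff (diagSum (k : ℝ) b) = 0 := by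
  rw [← PowerSeries.coeff_zero_eq_constantCoeff_apply]
  exact diag_coeff_zero _ _ hb0

lemma b_one (hb0 : b 0 = 0) (heq : KTreeSeriesEq k b) : b 1 = 1 := by
  rw [b_succ heq 0, exp_coeff _ (diag_const0 hb0) 0]
  simp

lemma b_two (hb0 : b 0 = 0) (heq : KTreeSeriesEq k b) : b 2 = k := by
  rw [b_succ heq 1, exp_coeff _ (diag_const0 hb0) 1]
  rw [Finset.sum_range_succ, Finset.sum_range_one]
  rw [pow_zero, pow_one, diag_coeff _ _ 1 one_ne_zero]
  simp [Nat.divisors_one, b_one hb0 heq]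

lemma b_superm (hb0 : b 0 = 0) (hb : ∀ n, 0 ≤ b n) (heq : KTreeSeriesEq k b) (n m : ℕ) (hn : 1 ≤ n) (hm : 1 ≤ m) :
    (k : ℝ) * b n * ((k : ℝ) * b m) / 2 ≤ b (n + m + 1) := by
  have hkn : (0:ℝ) ≤ k := Nat.cast_nonneg k
  set A := diagSum (k : ℝ) b with hA
  have hAnn : ∀ d, 0 ≤ PowerSeries.coeff d A :=
    diag_coeff_nonneg _ hkn _ hb0 hb
  have key : PowerSeries.coeff n A * PowerSeries.coeff m A
      ≤ PowerSeries.coeff (n + m) (A ^ 2) := by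
    rw [sq, PowerSeries.coeff_mul]
    exact Finset.single_le_sum
      (f := fun p : ℕ × ℕ => PowerSeries.coeff p.1 A * PowerSeries.coeff p.2 A)
      (a := (n, m)) (fun p _ => mul_nonneg (hAnn p.1) (hAnn p.2))
      (Finset.HasAntidiagonal.mem_antidiagonal.mpr rfl)
  have key2 : (k : ℝ) * b n * ((k : ℝ) * b m)
      ≤ PowerSeries.coeff (n + m) (A ^ 2) := by
    refine le_trans ?_ key
    exact mul_le_mul (diag_coeff_ge _ hkn _ hb n (by omega))
      (diag_coeff_ge _ hkn _ hb m (by omega)) (mul_nonneg hkn (hb m)) (hAnn n)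
  rw [b_succ heq (n + m), exp_coeff _ (diag_const0 hb0) (n + m)]
  have h2mem : 2 ∈ Finset.range (n + m + 1) := by
    rw [Finset.mem_range]; omega
  calc (k : ℝ) * b n * ((k : ℝ) * b m) / 2
      ≤ PowerSeries.coeff (n + m) (A ^ 2) / (Nat.factorial 2 : ℝ) := by
        rw [show (Nat.factorial 2 : ℝ) = 2 by norm_num]
        linarith
    _ ≤ ∑ i ∈ Finset.range (n + m + 1),
          PowerSeries.coeff (n + m) (A ^ i) / (Nat.factorial i : ℝ) :=
        Finset.single_le_sum
          (f := fun i => PowerSeries.coeff (n + m) (A ^ i) / (Nat.factorial i : ℝ))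
          (fun i _ => div_nonneg (pow_coeff_nonneg A hAnn i (n+m)) (by positivity)) h2mem

end coeffs

section radius

variable {k : ℕ} {b : ℕ → ℝ} {ρ : ℝ}

lemma coeff_bound_lt (hb0 : b 0 = 0) (hb : ∀ n, 0 ≤ b n) (heq : KTreeSeriesEq k b)
    (hr : IsRadius b ρ) {x : ℝ} (hx : 0 ≤ x) (hxρ : x < ρ)
    (n : ℕ) (hn : 1 ≤ n) : (k : ℝ)^2 / 2 * b n * x^(n+1) ≤ 1 := by
  set w : ℕ → ℝ := fun n => (k : ℝ)^2 / 2 * b n * x^(n+1) with hw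
  have hwnn : ∀ n, 0 ≤ w n := fun n =>
    mul_nonneg (mul_nonneg (by positivity) (hb n)) (pow_nonneg hx _)
  have hsup : ∀ n m : ℕ, 1 ≤ n → 1 ≤ m → w n * w m ≤ w (n + m + 1) := by
    intro n m hn1 hm1
    have hs := b_superm hb0 hb heq n m hn1 hm1
    have hxp : (0:ℝ) ≤ x ^ (n + m + 2) := pow_nonneg hx _
    have hEq : w n * w m
        = (k : ℝ)^2 / 2 * ((k : ℝ) * b n * ((k : ℝ) * b m) / 2) * x ^ (n + m + 2) := by
      simp only [hw]
      rw [show n + m + 2 = (n+1) + (m+1) by ring, pow_add]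
      ring
    have hEq2 : w (n + m + 1) = (k : ℝ)^2 / 2 * b (n + m + 1) * x ^ (n + m + 2) := rfl
    rw [hEq, hEq2]
    apply mul_le_mul_of_nonneg_right _ hxp
    exact mul_le_mul_of_nonneg_left hs (by positivity)
  -- all w n ≤ 1 for n ≥ 1
  by_contra hcon
  push_neg at hcon
  set N := n with hN
  have hwN : 1 < w N := hcon
  have hiter : ∀ j : ℕ, w N ^ (j + 1) ≤ w ((N + 1) * j + N) := by
    intro j
    induction j with
    | zero => simp
    | succ j ih =>
        have h1 : 1 ≤ (N + 1) * j + N := by omega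
        calc w N ^ (j + 1 + 1) = w N ^ (j + 1) * w N := by ring
          _ ≤ w ((N + 1) * j + N) * w N :=
              mul_le_mul_of_nonneg_right ih (hwnn N)
          _ ≤ w ((N + 1) * j + N + N + 1) := hsup _ _ h1 hn
          _ = w ((N + 1) * (j + 1) + N) := by ring_nf
  have hsum := (hr.1 x hx hxρ).tendsto_atTop_zero
  have hw0 : Tendsto w atTop (nhds 0) := by
    have : w = fun n => ((k : ℝ)^2 / 2 * x) * (b n * x ^ n) := by
      funext n; simp only [hw]; ring
    rw [this]
    simpa using hsum.const_mul ((k : ℝ)^2 / 2 * x)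
  have hsub : Tendsto (fun j : ℕ => w ((N + 1) * j + N)) atTop (nhds 0) := by
    apply hw0.comp
    apply tendsto_atTop_mono (f := id)
    · intro j; simp; calc j = 1 * j := (one_mul j).symm
        _ ≤ (N + 1) * j := Nat.mul_le_mul_right j (by omega)
        _ ≤ (N + 1) * j + N := Nat.le_add_right _ _
    · exact tendsto_id
  have hlt : ∀ᶠ j in atTop, w ((N + 1) * j + N) < 1 := by
    have := hsub.eventually (eventually_lt_nhds zero_lt_one)
    exact this
  obtain ⟨j, hj⟩ := hlt.exists
  have : (1:ℝ) < w ((N + 1) * j + N) :=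
    lt_of_lt_of_le (one_lt_pow₀ hwN (by omega)) (hiter j)
  linarith

lemma coeff_bound (hb0 : b 0 = 0) (hb : ∀ n, 0 ≤ b n) (heq : KTreeSeriesEq k b)
    (hρ0 : 0 < ρ) (hr : IsRadius b ρ) (n : ℕ) (hn : 1 ≤ n) :
    (k : ℝ)^2 / 2 * b n * ρ^(n+1) ≤ 1 := by
  have hne : 𝓝[Set.Ioo (0:ℝ) ρ] ρ ≠ ⊥ := by
    rw [← neBot_iff, ← mem_closure_iff_nhdsWithin_neBot, closure_Ioo (ne_of_lt hρ0)]
    exact Set.right_mem_Icc.mpr (le_of_lt hρ0)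
  have hneB : (𝓝[Set.Ioo (0:ℝ) ρ] ρ).NeBot := neBot_iff.mpr hne
  have hcont : Tendsto (fun x : ℝ => (k : ℝ)^2 / 2 * b n * x^(n+1))
      (𝓝[Set.Ioo (0:ℝ) ρ] ρ) (nhds ((k : ℝ)^2 / 2 * b n * ρ^(n+1))) := by
    apply ContinuousWithinAt.tendsto
    exact (Continuous.continuousWithinAt (by continuity))
  refine le_of_tendsto hcont ?_
  filter_upwards [eventually_mem_nhdsWithin] with x hx
  exact coeff_bound_lt hb0 hb heq hr (le_of_lt hx.1) hx.2 n hn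

end radius

section tail

variable {k : ℕ} {b : ℕ → ℝ} {ρ : ℝ}

lemma sTail_nonneg (hb : ∀ n, 0 ≤ b n) (hρ0 : 0 ≤ ρ) : 0 ≤ sTail b ρ :=
  tsum_nonneg fun i => tsum_nonneg fun n =>
    mul_nonneg (mul_nonneg (Nat.cast_nonneg n) (hb n)) (pow_nonneg (pow_nonneg hρ0 _) _)

lemma sTail_le (hk : 1 ≤ k) (hb : ∀ n, 0 ≤ b n) (hρ0 : 0 < ρ) (hρ1 : ρ < 1)
    (hcb : ∀ n, 1 ≤ n → (k : ℝ)^2 / 2 * b n * ρ^(n+1) ≤ 1) :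
    sTail b ρ ≤ 2 / ((k : ℝ)^2 * (1 - ρ)^3) := by
  have hk0 : (0:ℝ) < k := by exact_mod_cast hk
  have hbn : ∀ n, 1 ≤ n → b n * ρ^n ≤ 2 / ((k : ℝ)^2 * ρ) := by
    intro n hn
    have h : (k : ℝ)^2 / 2 * b n * (ρ^n * ρ) ≤ 1 := by
      rw [← pow_succ]; exact hcb n hn
    rw [le_div_iff₀ (by positivity)]
    nlinarith [hb n, pow_nonneg (le_of_lt hρ0) n]
  set c : ℝ := 2 / ((k : ℝ)^2 * ρ) with hc
  have hc0 : 0 ≤ c := by positivity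
  set G : ℕ → ℝ := fun i => c * (ρ^(i+1) / (1 - ρ)^2) with hG
  have h1ρ : (0:ℝ) < 1 - ρ := by linarith
  -- pointwise inner bound
  have hpt : ∀ i n : ℕ, (n : ℝ) * b n * (ρ ^ (i + 2)) ^ n ≤ c * ((n : ℝ) * (ρ^(i+1)) ^ n) := by
    intro i n
    rcases Nat.eq_zero_or_pos n with rfl | hn
    · simp
    · have hsplit : (ρ ^ (i + 2)) ^ n = ρ ^ n * (ρ^(i+1)) ^ n := by
        rw [← mul_pow, ← pow_succ']
      rw [hsplit]
      have h2 := hbn n hn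
      have hqn : (0:ℝ) ≤ (ρ^(i+1))^n := pow_nonneg (pow_nonneg (le_of_lt hρ0) _) _
      calc (n : ℝ) * b n * (ρ ^ n * (ρ^(i+1)) ^ n)
          = (n : ℝ) * (b n * ρ ^ n) * (ρ^(i+1)) ^ n := by ring
        _ ≤ (n : ℝ) * c * (ρ^(i+1)) ^ n := by
            apply mul_le_mul_of_nonneg_right _ hqn
            exact mul_le_mul_of_nonneg_left h2 (Nat.cast_nonneg n)
        _ = c * ((n : ℝ) * (ρ^(i+1)) ^ n) := by ring
  have hq1 : ∀ i : ℕ, ρ^(i+1) < 1 := fun i => pow_lt_one₀ (le_of_lt hρ0) hρ1 (by omega)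
  have hq0 : ∀ i : ℕ, (0:ℝ) ≤ ρ^(i+1) := fun i => pow_nonneg (le_of_lt hρ0) _
  have hgsum : ∀ i : ℕ, Summable (fun n : ℕ => c * ((n : ℝ) * (ρ^(i+1)) ^ n)) := by
    intro i
    apply Summable.mul_left
    have := hasSum_coe_mul_geometric_of_norm_lt_one
      (r := ρ^(i+1)) (by rw [Real.norm_eq_abs, abs_of_nonneg (hq0 i)]; exact hq1 i)
    exact this.summable
  have hfnn : ∀ i n : ℕ, 0 ≤ (n : ℝ) * b n * (ρ ^ (i + 2)) ^ n := fun i n =>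
    mul_nonneg (mul_nonneg (Nat.cast_nonneg n) (hb n))
      (pow_nonneg (pow_nonneg (le_of_lt hρ0) _) _)
  have hfsum : ∀ i : ℕ, Summable (fun n : ℕ => (n : ℝ) * b n * (ρ ^ (i + 2)) ^ n) := fun i =>
    Summable.of_nonneg_of_le (hfnn i) (hpt i) (hgsum i)
  -- inner tsum bound
  have hinner : ∀ i : ℕ, (∑' n : ℕ, (n : ℝ) * b n * (ρ ^ (i + 2)) ^ n) ≤ G i := by
    intro i
    have h1 : (∑' n : ℕ, (n : ℝ) * b n * (ρ ^ (i + 2)) ^ n)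
        ≤ ∑' n : ℕ, c * ((n : ℝ) * (ρ^(i+1)) ^ n) :=
      Summable.tsum_le_tsum (hpt i) (hfsum i) (hgsum i)
    have h2 : (∑' n : ℕ, c * ((n : ℝ) * (ρ^(i+1)) ^ n))
        = c * (ρ^(i+1) / (1 - ρ^(i+1)) ^ 2) := by
      rw [tsum_mul_left]
      congr 1
      exact tsum_coe_mul_geometric_of_norm_lt_one
        (by rw [Real.norm_eq_abs, abs_of_nonneg (hq0 i)]; exact hq1 i)
    have h3 : c * (ρ^(i+1) / (1 - ρ^(i+1)) ^ 2) ≤ G i := by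
      apply mul_le_mul_of_nonneg_left _ hc0
      apply div_le_div_of_nonneg_left (hq0 i) (by positivity)
      have : ρ^(i+1) ≤ ρ := by
        calc ρ^(i+1) ≤ ρ^1 := pow_le_pow_of_le_one (le_of_lt hρ0) (le_of_lt hρ1) (by omega)
          _ = ρ := pow_one ρ
      nlinarith
    calc _ ≤ _ := h1
      _ = _ := h2
      _ ≤ _ := h3
  have hGsum : Summable G := by
    have : Summable (fun i : ℕ => ρ ^ i) := summable_geometric_of_lt_one (le_of_lt hρ0) hρ1
    have h2 : Summable (fun i : ℕ => (c * ρ / (1-ρ)^2) * ρ ^ i) := this.mul_left _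
    apply h2.congr
    intro i
    simp only [hG, pow_succ']
    ring
  have houter : sTail b ρ ≤ ∑' i, G i := by
    apply Summable.tsum_le_tsum hinner _ hGsum
    apply Summable.of_nonneg_of_le (fun i => tsum_nonneg (hfnn i)) hinner hGsum
  have hGval : ∑' i, G i = 2 / ((k : ℝ)^2 * (1 - ρ)^3) := by
    have h2 : ∑' i, G i = (c * ρ / (1-ρ)^2) * ∑' i : ℕ, ρ ^ i := by
      rw [← tsum_mul_left]
      congr 1; funext i; simp only [hG, pow_succ']; ring
    rw [h2, tsum_geometric_of_lt_one (le_of_lt hρ0) hρ1, hc]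
    have hρne : ρ ≠ 0 := ne_of_gt hρ0
    have h1ρne : (1:ℝ) - ρ ≠ 0 := ne_of_gt h1ρ
    field_simp
  linarith [houter, hGval.le, hGval.ge]

end tail

lemma rho_half {k : ℕ} {b : ℕ → ℝ} {ρ : ℝ} (hb0 : b 0 = 0) (hb : ∀ n, 0 ≤ b n)
    (heq : KTreeSeriesEq k b) (hρ0 : 0 < ρ) (hr : IsRadius b ρ) (hk3 : 3 ≤ k) :
    ρ ≤ 1 / 2 := by
  have h := coeff_bound hb0 hb heq hρ0 hr 2 (by norm_num)
  rw [b_two hb0 heq] at h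
  by_contra hcon
  push_neg at hcon
  have hk3' : (3:ℝ) ≤ (k : ℝ) := by exact_mod_cast hk3
  have h8 : (1:ℝ)/8 < ρ^3 := by
    have := pow_lt_pow_left₀ hcon (by norm_num : (0:ℝ) ≤ 1/2) (by norm_num : 3 ≠ 0)
    norm_num at this
    linarith
  have hk27 : (27:ℝ) ≤ (k:ℝ)^2 * k := by nlinarith
  have hρ3 : (0:ℝ) < ρ^3 := by positivity
  nlinarith [mul_le_mul hk27 h8.le (by norm_num) (by positivity : (0:ℝ) ≤ (k:ℝ)^2 * k)]

theorem statement12 (b : ℕ → ℕ → ℝ) (ρ : ℕ → ℝ)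
    (h : ∀ k : ℕ, 1 ≤ k →
      b k 0 = 0 ∧ (∀ n, 0 ≤ b k n) ∧ KTreeSeriesEq k (b k) ∧
        0 < ρ k ∧ ρ k < 1 ∧ IsRadius (b k) (ρ k)) :
    ∃ C > (0 : ℝ), ∀ k : ℕ, 1 ≤ k →
      |cConst k (b k) (ρ k) - (k : ℝ) * ∑ i ∈ Finset.range k, (1 : ℝ) / (i + 1)| ≤
        (C / k) * ((k : ℝ) * ∑ i ∈ Finset.range k, (1 : ℝ) / (i + 1)) := by
  obtain ⟨hb01, hbn1, heq1, hρ01, hρ11, hr1⟩ := h 1 le_rfl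
  obtain ⟨hb02, hbn2, heq2, hρ02, hρ12, hr2⟩ := h 2 (by norm_num)
  set s1 : ℝ := sTail (b 1) (ρ 1) with hs1def
  set s2 : ℝ := sTail (b 2) (ρ 2) with hs2def
  have hs1 : 0 ≤ s1 := sTail_nonneg hbn1 (le_of_lt hρ01)
  have hs2 : 0 ≤ s2 := sTail_nonneg hbn2 (le_of_lt hρ02)
  refine ⟨8 + s1 + 2 * s2, by linarith, ?_⟩
  set C : ℝ := 8 + s1 + 2 * s2 with hCdef
  intro k hk
  obtain ⟨hb0, hbn, heq, hρ0, hρ1, hr⟩ := h k hk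
  have hk0 : (0:ℝ) < (k : ℝ) := by exact_mod_cast hk
  set s : ℝ := sTail (b k) (ρ k) with hsdef
  set H : ℝ := ∑ i ∈ Finset.range k, (1 : ℝ) / (i + 1) with hHdef
  have hs0 : 0 ≤ s := sTail_nonneg hbn (le_of_lt hρ0)
  have hH1 : 1 ≤ H := by
    rw [hHdef]
    calc (1:ℝ) = 1 / ((0:ℕ) + 1) := by norm_num
      _ ≤ ∑ i ∈ Finset.range k, (1 : ℝ) / (i + 1) :=
        Finset.single_le_sum (f := fun i : ℕ => (1:ℝ) / (i + 1))
          (fun i _ => by positivity) (Finset.mem_range.mpr (by omega))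
  -- key: k^2 * s ≤ 2 * C
  have hkey : (k:ℝ)^2 * s ≤ 2 * C := by
    rcases lt_or_ge k 3 with hk3 | hk3
    · interval_cases k
      · simp only [hsdef]
        push_cast
        linarith
      · simp only [hsdef]
        push_cast
        linarith
    · have hhalf : ρ k ≤ 1 / 2 := rho_half hb0 hbn heq hρ0 hr hk3
      have hcb := fun n hn => coeff_bound hb0 hbn heq hρ0 hr n hn
      have hle : s ≤ 2 / ((k : ℝ)^2 * (1 - ρ k)^3) :=
        sTail_le hk hbn hρ0 hρ1 hcb
      have h183 : (1:ℝ)/8 ≤ (1 - ρ k)^3 := by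
        have h12 : (1:ℝ)/2 ≤ 1 - ρ k := by linarith
        have := pow_le_pow_left₀ (by norm_num : (0:ℝ) ≤ 1/2) h12 3
        norm_num at this
        linarith
      have hbound : 2 / ((k : ℝ)^2 * (1 - ρ k)^3) ≤ 16 / (k:ℝ)^2 := by
        rw [div_le_div_iff₀ (by nlinarith) (by positivity)]
        nlinarith
      have : (k:ℝ)^2 * s ≤ 16 := by
        have := hle.trans hbound
        calc (k:ℝ)^2 * s ≤ (k:ℝ)^2 * (16 / (k:ℝ)^2) :=
          mul_le_mul_of_nonneg_left this (by positivity)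
        _ = 16 := by field_simp
      have hC8 : (8:ℝ) ≤ C := by rw [hCdef]; linarith
      linarith
  -- sqrt bounds
  have h1ks : (0:ℝ) ≤ 1 + (k:ℝ) * s := by positivity
  have hsqle : Real.sqrt (1 + (k:ℝ) * s) ≤ 1 + (k:ℝ) * s / 2 := by
    have h2 : (1 + (k:ℝ) * s) ≤ (1 + (k:ℝ) * s / 2)^2 := by
      nlinarith [sq_nonneg ((k:ℝ) * s)]
    calc Real.sqrt (1 + (k:ℝ) * s) ≤ Real.sqrt ((1 + (k:ℝ) * s / 2)^2) :=
        Real.sqrt_le_sqrt h2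
      _ = 1 + (k:ℝ) * s / 2 := Real.sqrt_sq (by positivity)
  have hsqge : 1 ≤ Real.sqrt (1 + (k:ℝ) * s) := by
    rw [show (1:ℝ) = Real.sqrt 1 by simp]
    exact Real.sqrt_le_sqrt (by nlinarith [Real.sqrt_one])
  have hkH : (0:ℝ) ≤ (k:ℝ) * H := by positivity
  have hcc : cConst k (b k) (ρ k) = (k:ℝ) * H * Real.sqrt (1 + (k:ℝ) * s) := by
    unfold cConst
    rw [← hsdef, ← hHdef]
  rw [hcc]
  have hge : (k:ℝ) * H * 1 ≤ (k:ℝ) * H * Real.sqrt (1 + (k:ℝ) * s) :=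
    mul_le_mul_of_nonneg_left hsqge hkH
  rw [abs_of_nonneg (by linarith)]
  have h4 : (k:ℝ) * H * Real.sqrt (1 + (k:ℝ) * s)
      ≤ (k:ℝ) * H * (1 + (k:ℝ) * s / 2) := mul_le_mul_of_nonneg_left hsqle hkH
  have h5 : (k:ℝ) * H * (1 + (k:ℝ) * s / 2)
      = (k:ℝ) * H + (k:ℝ) * H * ((k:ℝ) * s / 2) := by ring
  have hfinal : (k:ℝ) * H * Real.sqrt (1 + (k:ℝ) * s) - (k:ℝ) * H
      ≤ (k:ℝ) * H * ((k:ℝ) * s / 2) := by linarith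
  have hCk : (k:ℝ) * s / 2 ≤ C / (k:ℝ) := by
    rw [div_le_div_iff₀ (by norm_num) hk0]
    nlinarith
  calc (k:ℝ) * H * Real.sqrt (1 + (k:ℝ) * s) - (k:ℝ) * H
      ≤ (k:ℝ) * H * ((k:ℝ) * s / 2) := hfinal
    _ ≤ (k:ℝ) * H * (C / (k:ℝ)) :=
        mul_le_mul_of_nonneg_left hCk hkH
    _ = C / (k:ℝ) * ((k:ℝ) * H) := by ring
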